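/- Let n ≥ 2 and m ≥ 1 be integers, and for every integer j let u_j(s) = cosh(s)^j · sinh(s)^{2−n−m} for s > 0 (integer powers, possibly negative). Let κ_i = (m−i−1)(m+n−2−i). Then for every integer i with 0 ≤ i ≤ m−1 and every s > 0: (𝒟_m u_i)(s) − κ_i·u_i(s) = −i(i−1)·u_{i−2}(s). -/

import Mathlib

/-- The second-order operator `𝒟_k f (s) = f''(s) + (n-1)·coth(s)·f'(s)
    - (k(k+n-2)/sinh²(s))·f(s)`. -/
noncomputable def Dop (n k : ℤ) (f : ℝ → ℝ) : ℝ → ℝ := fun s =>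
  deriv (deriv f) s + ((n : ℝ) - 1) * (Real.cosh s / Real.sinh s) * deriv f s
    - ((k : ℝ) * ((k : ℝ) + (n : ℝ) - 2) / (Real.sinh s) ^ 2) * f s

private lemma key_CS (p q : ℤ) (t : ℝ) (ht : 0 < t) :
    HasDerivAt (fun r => Real.cosh r ^ p * Real.sinh r ^ q)
      ((p : ℝ) * Real.cosh t ^ (p - 1) * Real.sinh t ^ (q + 1)
        + (q : ℝ) * Real.cosh t ^ (p + 1) * Real.sinh t ^ (q - 1)) t := by
  have hC : Real.cosh t ≠ 0 := (Real.cosh_pos t).ne'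
  have hS : Real.sinh t ≠ 0 := (Real.sinh_pos_iff.2 ht).ne'
  have h1 : HasDerivAt (fun r => Real.cosh r ^ p)
      ((p : ℝ) * Real.cosh t ^ (p - 1) * Real.sinh t) t := by
    exact (hasDerivAt_zpow p (Real.cosh t) (Or.inl hC)).comp t (Real.hasDerivAt_cosh t)
  have h2 : HasDerivAt (fun r => Real.sinh r ^ q)
      ((q : ℝ) * Real.sinh t ^ (q - 1) * Real.cosh t) t := by
    exact (hasDerivAt_zpow q (Real.sinh t) (Or.inl hS)).comp t (Real.hasDerivAt_sinh t)
  have := h1.mul h2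
  refine this.congr_deriv ?_
  rw [zpow_add_one₀ hS, zpow_add_one₀ hC]
  ring

private lemma zp (x : ℝ) (hx : x ≠ 0) (b : ℤ) (k : ℕ) :
    x ^ (b + (k : ℤ)) = x ^ b * x ^ k := by
  rw [zpow_add₀ hx, zpow_natCast]

/-- Proposition `P:D_m`: `(𝒟_m - κ_i) u_i = -i(i-1) u_{i-2}` where
    `u_j(s) = cosh^j(s) sinh^{2-n-m}(s)` and `κ_i = (m-i-1)(m+n-2-i)`. -/
theorem stmt_3 (n m : ℤ) (hn : 2 ≤ n) (hm : 1 ≤ m)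
    (u : ℤ → ℝ → ℝ)
    (hu : ∀ (j : ℤ) (s : ℝ), u j s = Real.cosh s ^ j * Real.sinh s ^ (2 - n - m))
    (κ : ℤ → ℝ) (hκ : ∀ j : ℤ, κ j = ((m - j - 1) * (m + n - 2 - j) : ℤ))
    (i : ℤ) (hi0 : 0 ≤ i) (him : i ≤ m - 1) (s : ℝ) (hs : 0 < s) :
    Dop n m (u i) s - κ i * u i s = -((i : ℝ) * ((i : ℝ) - 1)) * u (i - 2) s := by
  set a : ℤ := 2 - n - m with ha
  have hfun : u i = fun t => Real.cosh t ^ i * Real.sinh t ^ a := funext fun t => hu i t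
  set g : ℝ → ℝ := fun t =>
    (i : ℝ) * (Real.cosh t ^ (i - 1) * Real.sinh t ^ (a + 1))
      + (a : ℝ) * (Real.cosh t ^ (i + 1) * Real.sinh t ^ (a - 1)) with hg
  have hder1 : ∀ t : ℝ, 0 < t → HasDerivAt (u i) (g t) t := by
    intro t ht
    rw [hfun]
    have := key_CS i a t ht
    convert this using 1
    simp only [hg]
    ring
  have hdg : deriv (u i) =ᶠ[nhds s] g := by
    filter_upwards [isOpen_Ioi.mem_nhds hs] with t ht
    exact (hder1 t ht).deriv
  have h1 := (key_CS (i - 1) (a + 1) s hs).const_mul (i : ℝ)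
  have h2 := (key_CS (i + 1) (a - 1) s hs).const_mul (a : ℝ)
  have hder2 := h1.add h2
  have hd2 : deriv (deriv (u i)) s =
      (i : ℝ) * (((i - 1 : ℤ) : ℝ) * Real.cosh s ^ (i - 1 - 1) * Real.sinh s ^ (a + 1 + 1)
          + ((a + 1 : ℤ) : ℝ) * Real.cosh s ^ (i - 1 + 1) * Real.sinh s ^ (a + 1 - 1))
        + (a : ℝ) * (((i + 1 : ℤ) : ℝ) * Real.cosh s ^ (i + 1 - 1) * Real.sinh s ^ (a - 1 + 1)
          + ((a - 1 : ℤ) : ℝ) * Real.cosh s ^ (i + 1 + 1) * Real.sinh s ^ (a - 1 - 1)) := by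
    rw [hdg.deriv_eq]; exact hder2.deriv
  have hd1 : deriv (u i) s = g s := (hder1 s hs).deriv
  have hC : Real.cosh s ≠ 0 := (Real.cosh_pos s).ne'
  have hS : Real.sinh s ≠ 0 := (Real.sinh_pos_iff.2 hs).ne'
  have hsq : Real.cosh s ^ (2 : ℕ) = 1 + Real.sinh s ^ (2 : ℕ) := Real.cosh_sq' s
  rw [Dop, hd2, hd1, hκ, hu (i - 2) s]
  simp only [hg, hfun]
  beta_reduce
  set C := Real.cosh s
  set S := Real.sinh s
  set X := C ^ (i - 2) with hX
  set Y := S ^ (a - 2) with hY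
  have c1 : C ^ (i - 1 - 1) = X * C ^ (0 : ℕ) := by
    rw [show i - 1 - 1 = (i - 2) + ((0 : ℕ) : ℤ) by push_cast; ring, zp _ hC]
  have c2 : C ^ (i - 1) = X * C ^ (1 : ℕ) := by
    rw [show i - 1 = (i - 2) + ((1 : ℕ) : ℤ) by push_cast; ring, zp _ hC]
  have c3 : C ^ (i - 1 + 1) = X * C ^ (2 : ℕ) := by
    rw [show i - 1 + 1 = (i - 2) + ((2 : ℕ) : ℤ) by push_cast; ring, zp _ hC]
  have c3' : C ^ i = X * C ^ (2 : ℕ) := by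
    rw [show i = (i - 2) + ((2 : ℕ) : ℤ) by push_cast; ring, zp _ hC]
  have c4 : C ^ (i + 1) = X * C ^ (3 : ℕ) := by
    rw [show i + 1 = (i - 2) + ((3 : ℕ) : ℤ) by push_cast; ring, zp _ hC]
  have c4' : C ^ (i + 1 - 1) = X * C ^ (2 : ℕ) := by
    rw [show i + 1 - 1 = (i - 2) + ((2 : ℕ) : ℤ) by push_cast; ring, zp _ hC]
  have c5 : C ^ (i + 1 + 1) = X * C ^ (4 : ℕ) := by
    rw [show i + 1 + 1 = (i - 2) + ((4 : ℕ) : ℤ) by push_cast; ring, zp _ hC]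
  have d1 : S ^ (a - 1 - 1) = Y * S ^ (0 : ℕ) := by
    rw [show a - 1 - 1 = (a - 2) + ((0 : ℕ) : ℤ) by push_cast; ring, zp _ hS]
  have d2 : S ^ (a - 1) = Y * S ^ (1 : ℕ) := by
    rw [show a - 1 = (a - 2) + ((1 : ℕ) : ℤ) by push_cast; ring, zp _ hS]
  have d3 : S ^ (a - 1 + 1) = Y * S ^ (2 : ℕ) := by
    rw [show a - 1 + 1 = (a - 2) + ((2 : ℕ) : ℤ) by push_cast; ring, zp _ hS]
  have d3' : S ^ a = Y * S ^ (2 : ℕ) := by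
    rw [show a = (a - 2) + ((2 : ℕ) : ℤ) by push_cast; ring, zp _ hS]
  have d4 : S ^ (a + 1) = Y * S ^ (3 : ℕ) := by
    rw [show a + 1 = (a - 2) + ((3 : ℕ) : ℤ) by push_cast; ring, zp _ hS]
  have d4' : S ^ (a + 1 - 1) = Y * S ^ (2 : ℕ) := by
    rw [show a + 1 - 1 = (a - 2) + ((2 : ℕ) : ℤ) by push_cast; ring, zp _ hS]
  have d5 : S ^ (a + 1 + 1) = Y * S ^ (4 : ℕ) := by
    rw [show a + 1 + 1 = (a - 2) + ((4 : ℕ) : ℤ) by push_cast; ring, zp _ hS]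
  rw [c1, c2, c3, c3', c4, c4', c5, d1, d2, d3, d3', d4, d4', d5]
  have han : (a : ℝ) = 2 - (n : ℝ) - (m : ℝ) := by rw [ha]; push_cast; ring
  push_cast [han]
  field_simp
  rw [hsq]
  ring
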